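/- Let G be a finite group generated by two abelian subnormal subgroups A and B. Then G is nilpotent. -/

import Mathlib

/-- A subgroup `H` of `G` is subnormal if there is a chain
`H = c 0 ≤ c 1 ≤ ... ≤ c n = G` with each term normal in the next. -/
def Subgroup.IsSubnormal' {G : Type*} [Group G] (H : Subgroup G) : Prop :=
  ∃ (n : ℕ) (c : Fin (n + 1) → Subgroup G),
    c 0 = H ∧ c (Fin.last n) = ⊤ ∧
    ∀ i : Fin n, c i.castSucc ≤ c i.succ ∧
      ((c i.castSucc).subgroupOf (c i.succ)).Normal

/-- A group is supersoluble if it has a normal series (all terms normal in `G`)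
with cyclic factors; the factor `c (i+1) / c i` being cyclic is expressed as
`c (i+1)` being generated by `c i` together with a single element. -/
def IsSupersolvable (G : Type*) [Group G] : Prop :=
  ∃ (n : ℕ) (c : Fin (n + 1) → Subgroup G),
    c 0 = ⊥ ∧ c (Fin.last n) = ⊤ ∧
    (∀ i, (c i).Normal) ∧
    ∀ i : Fin n, c i.castSucc ≤ c i.succ ∧
      ∃ g ∈ c i.succ, c i.succ ≤ c i.castSucc ⊔ Subgroup.zpowers g

/-- The Fitting subgroup: the join of all normal nilpotent subgroups
(in a finite group, the largest normal nilpotent subgroup). -/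
def fittingSubgroup (G : Type*) [Group G] : Subgroup G :=
  sSup {N : Subgroup G | N.Normal ∧ Group.IsNilpotent N}

instance fittingSubgroup_normal (G : Type*) [Group G] : (fittingSubgroup G).Normal := by
  constructor
  intro x hx g
  rw [fittingSubgroup, sSup_eq_iSup'] at hx ⊢
  refine Subgroup.iSup_induction
    (C := fun y => g * y * g⁻¹ ∈
      ⨆ (N : {N : Subgroup G // N.Normal ∧ Group.IsNilpotent N}), (N : Subgroup G))
    _ hx (fun N y hy => ?_) (by simpa using Subgroup.one_mem _) (fun y z hy hz => ?_)
  · exact Subgroup.mem_iSup_of_mem N (N.2.1.conj_mem y hy g)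
  · simpa [mul_assoc] using Subgroup.mul_mem _ hy hz

/-- `O_p(G)`: the join of all normal `p`-subgroups
(in a finite group, the largest normal `p`-subgroup). -/
def pCore (p : ℕ) (G : Type*) [Group G] : Subgroup G :=
  sSup {N : Subgroup G | N.Normal ∧ IsPGroup p N}

instance pCore_normal (p : ℕ) (G : Type*) [Group G] : (pCore p G).Normal := by
  constructor
  intro x hx g
  rw [pCore, sSup_eq_iSup'] at hx ⊢
  refine Subgroup.iSup_induction
    (C := fun y => g * y * g⁻¹ ∈
      ⨆ (N : {N : Subgroup G // N.Normal ∧ IsPGroup p N}), (N : Subgroup G))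
    _ hx (fun N y hy => ?_) (by simpa using Subgroup.one_mem _) (fun y z hy hz => ?_)
  · exact Subgroup.mem_iSup_of_mem N (N.2.1.conj_mem y hy g)
  · simpa [mul_assoc] using Subgroup.mul_mem _ hy hz

/-- `G` has a Sylow tower of supersoluble type: a normal series `⊥ = c 0 ≤ ... ≤ c n = ⊤`
(all terms normal in `G`) together with strictly decreasing primes `p 0 > p 1 > ... `
exhausting the primes dividing `|G|`, such that each factor `c (i+1) / c i` is a
Sylow `p i`-subgroup of `G / c i` (i.e. has order the full `p i`-part of `|G|`). -/
def HasSupersolubleSylowTower (G : Type*) [Group G] : Prop :=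
  ∃ (n : ℕ) (c : Fin (n + 1) → Subgroup G) (p : Fin n → ℕ),
    c 0 = ⊥ ∧ c (Fin.last n) = ⊤ ∧
    (∀ i, (c i).Normal) ∧
    (∀ i : Fin n, c i.castSucc ≤ c i.succ) ∧
    (∀ i, (p i).Prime) ∧
    (∀ i j : Fin n, i < j → p j < p i) ∧
    (∀ q : ℕ, q.Prime → q ∣ Nat.card G → ∃ i, p i = q) ∧
    (∀ i : Fin n,
      Nat.card (c i.succ) = Nat.card (c i.castSucc) * p i ^ (Nat.card G).factorization (p i))


section AuxiliaryLemmas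

open Subgroup

variable {G : Type*} [Group G]

/-- In a finite group, the `sSup` of a set of subgroups containing `⊥` and closed
under joins belongs to the set. -/
lemma sSup_mem_of_closed' [Finite G] {S : Set (Subgroup G)} (hbot : ⊥ ∈ S)
    (hsup : ∀ N ∈ S, ∀ M ∈ S, N ⊔ M ∈ S) : sSup S ∈ S := by
  have hfin : S.Finite := Set.toFinite S
  have : sSup S = hfin.toFinset.sup id := by
    rw [Finset.sup_id_eq_sSup, hfin.coe_toFinset]
  rw [this]
  exact Finset.sup_induction hbot (fun a ha b hb => hsup a ha b hb)
    (fun i hi => by simpa using hfin.mem_toFinset.mp hi)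

/-- The set of `p`-subgroups of `K` invariant under conjugation by elements of `K`. -/
def relCoreSet (p : ℕ) (K : Subgroup G) : Set (Subgroup G) :=
  {N | N ≤ K ∧ IsPGroup p N ∧ ∀ g ∈ K, ∀ x ∈ N, g * x * g⁻¹ ∈ N}

/-- The relative `p`-core of `K`. -/
noncomputable def relCoreP (p : ℕ) (K : Subgroup G) : Subgroup G := sSup (relCoreSet p K)

lemma relCoreP_mem [Finite G] (p : ℕ) (K : Subgroup G) : relCoreP p K ∈ relCoreSet p K := by
  refine sSup_mem_of_closed' ⟨bot_le, IsPGroup.of_bot, by simp⟩ ?_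
  rintro N ⟨hNK, hNp, hNi⟩ M ⟨hMK, hMp, hMi⟩
  refine ⟨sup_le hNK hMK, ?_, ?_⟩
  · refine hNp.to_sup_of_normal_right' hMp fun n hn => ?_
    rw [Subgroup.mem_normalizer_iff]
    intro m
    constructor
    · intro hm; exact hMi n (hNK hn) m hm
    · intro hm
      have := hMi n⁻¹ (K.inv_mem (hNK hn)) _ hm
      simpa [mul_assoc] using this
  · intro g hg x hx
    have : ((MulAut.conj g).toMonoidHom : G →* G) x ∈ (N ⊔ M).map (MulAut.conj g).toMonoidHom :=
      Subgroup.mem_map_of_mem _ hx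
    rw [Subgroup.map_sup] at this
    have hle : N.map (MulAut.conj g).toMonoidHom ⊔ M.map (MulAut.conj g).toMonoidHom ≤ N ⊔ M := by
      refine sup_le (le_trans ?_ le_sup_left) (le_trans ?_ le_sup_right) <;>
        · rw [Subgroup.map_le_iff_le_comap]
          intro y hy
          simp only [Subgroup.mem_comap, MulEquiv.coe_toMonoidHom, MulAut.conj_apply]
          first
          | exact hNi g hg y hy
          | exact hMi g hg y hy
    simpa [MulAut.conj_apply] using hle this

lemma chain_pgroup_le_relCoreP [Finite G] {p : ℕ} :
    ∀ (n : ℕ) (H : Subgroup G) (c : Fin (n + 1) → Subgroup G), c 0 = H →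
      c (Fin.last n) = ⊤ →
      (∀ i : Fin n, c i.castSucc ≤ c i.succ ∧ ((c i.castSucc).subgroupOf (c i.succ)).Normal) →
      IsPGroup p H → H ≤ relCoreP p ⊤ := by
  intro n
  induction n with
  | zero =>
    intro H c h0 hlast _ hH
    have : H = ⊤ := by rw [← h0, show (0 : Fin 1) = Fin.last 0 from rfl, hlast]
    subst this
    exact le_sSup ⟨le_rfl, hH, by simp⟩
  | succ n IH =>
    intro H c h0 hlast hc hH
    have key : ∀ (c : Fin (n + 1 + 1) → Subgroup G), c 0 = H →
        (∀ i : Fin (n+1), c i.castSucc ≤ c i.succ ∧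
          ((c i.castSucc).subgroupOf (c i.succ)).Normal) →
        (H ∈ relCoreSet p (c 1)) := by
      clear hlast
      intro c h0 hc
      set K := c 1 with hK
      have h01 : H ≤ K := by
        have := (hc 0).1
        rwa [Fin.castSucc_zero, h0, Fin.succ_zero_eq_one] at this
      have hnorm : (H.subgroupOf K).Normal := by
        have := (hc 0).2
        rwa [Fin.castSucc_zero, h0, Fin.succ_zero_eq_one] at this
      have hHinv : ∀ g ∈ K, ∀ x ∈ H, g * x * g⁻¹ ∈ H := by
        intro g hg x hx
        have := hnorm.conj_mem ⟨x, h01 hx⟩ (by simpa [Subgroup.mem_subgroupOf] using hx) ⟨g, hg⟩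
        simpa [Subgroup.mem_subgroupOf] using this
      exact ⟨h01, hH, hHinv⟩
    match n, c, hlast, hc, key c h0 hc with
    | 0, c, hlast, hc, hHmem =>
      have hKtop : c 1 = ⊤ := by rw [show (1 : Fin 2) = Fin.last 1 from rfl, hlast]
      rw [hKtop] at hHmem
      exact le_sSup hHmem
    | Nat.succ m, c, hlast, hc, hHmem =>
      set K := c 1 with hK
      have h01 : H ≤ K := hHmem.1
      obtain ⟨hPK, hPp, hPinv⟩ := relCoreP_mem p K
      have hHP : H ≤ relCoreP p K := le_sSup hHmem
      set P := relCoreP p K with hPdef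
      have h12 : K ≤ c (1 : Fin (m + 2)).succ := by
        have := (hc 1).1
        rwa [show ((1 : Fin (m+2)).castSucc) = (1 : Fin (m+3)) by rfl] at this
      have hKinv : ∀ g ∈ c (1 : Fin (m + 2)).succ, ∀ x ∈ K, g * x * g⁻¹ ∈ K := by
        intro g hg x hx
        have hn := (hc 1).2
        rw [show ((1 : Fin (m+2)).castSucc) = (1 : Fin (m+3)) by rfl] at hn
        have := hn.conj_mem ⟨x, h12 hx⟩ (Subgroup.mem_subgroupOf.mpr hx) ⟨g, hg⟩
        exact Subgroup.mem_subgroupOf.mp this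
      have hPinv2 : ∀ g ∈ c (1 : Fin (m + 2)).succ, ∀ x ∈ P, g * x * g⁻¹ ∈ P := by
        intro g hg
        have : P ≤ Subgroup.comap ((MulAut.conj g).toMonoidHom : G →* G) P := by
          refine sSup_le fun N hN => ?_
          obtain ⟨hNK, hNp, hNinv⟩ := hN
          intro x hx
          simp only [Subgroup.mem_comap, MulEquiv.coe_toMonoidHom, MulAut.conj_apply]
          have hN'mem : N.map ((MulAut.conj g).toMonoidHom : G →* G) ∈ relCoreSet p K := by
            refine ⟨?_, hNp.map _, ?_⟩
            · rintro y ⟨x, hxN, rfl⟩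
              exact hKinv g hg x (hNK hxN)
            · rintro h hh y ⟨x, hxN, rfl⟩
              have hghg : g⁻¹ * h * g ∈ K := by
                have := hKinv g⁻¹ (Subgroup.inv_mem _ hg) h hh
                simpa using this
              have hin : (g⁻¹ * h * g) * x * (g⁻¹ * h * g)⁻¹ ∈ N := hNinv _ hghg x hxN
              refine ⟨_, hin, ?_⟩
              simp only [MulEquiv.coe_toMonoidHom, MulAut.conj_apply]
              group
          have : (MulAut.conj g) x ∈ N.map ((MulAut.conj g).toMonoidHom : G →* G) :=
            Subgroup.mem_map_of_mem _ hx
          exact le_sSup hN'mem this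
        intro x hx
        simpa using this hx
      refine le_trans hHP (IH P (Fin.cases P (fun j : Fin (m + 1) => c j.succ.succ)) (by simp)
        ?_ ?_ hPp)
      · show (Fin.cases P (fun j : Fin (m + 1) => c j.succ.succ) (Fin.last (m + 1)) :
            Subgroup G) = ⊤
        rw [show Fin.last (m + 1) = (Fin.last m).succ from rfl, Fin.cases_succ]
        exact hlast
      · intro i
        induction i using Fin.cases with
        | zero =>
          show (Fin.cases P (fun j : Fin (m + 1) => c j.succ.succ)
              ((0 : Fin (m+1)).castSucc) : Subgroup G) ≤
              Fin.cases P (fun j : Fin (m + 1) => c j.succ.succ) ((0 : Fin (m+1)).succ) ∧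
              ((Fin.cases P (fun j : Fin (m + 1) => c j.succ.succ)
                ((0 : Fin (m+1)).castSucc) : Subgroup G).subgroupOf
               (Fin.cases P (fun j : Fin (m + 1) => c j.succ.succ) ((0 : Fin (m+1)).succ))).Normal
          rw [Fin.castSucc_zero, Fin.cases_zero, Fin.cases_succ]
          constructor
          · exact le_trans hPK h12
          · constructor
            rintro ⟨x, hx2⟩ hx ⟨g, hg⟩
            simp only [Subgroup.mem_subgroupOf] at hx ⊢
            exact hPinv2 g hg x hx
        | succ j =>
          rw [← Fin.succ_castSucc]
          simp only [Fin.cases_succ]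
          have := hc j.succ.succ
          rwa [show j.succ.succ.castSucc = j.castSucc.succ.succ by
              rw [← Fin.succ_castSucc, ← Fin.succ_castSucc]] at this

/-- A subnormal `p`-subgroup is contained in the relative `p`-core of `⊤`. -/
lemma Subgroup.IsSubnormal'.pgroup_le_relCoreP [Finite G] {p : ℕ} {H : Subgroup G}
    (hs : H.IsSubnormal') (hp : IsPGroup p H) : H ≤ relCoreP p ⊤ := by
  obtain ⟨n, c, h0, hlast, hc⟩ := hs
  exact chain_pgroup_le_relCoreP n H c h0 hlast hc hp

/-- Prepending a normal subgroup to a subnormal chain. -/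
lemma Subgroup.IsSubnormal'.of_le_of_normal {H K : Subgroup G} (hle : H ≤ K)
    (hn : (H.subgroupOf K).Normal) (hK : K.IsSubnormal') : H.IsSubnormal' := by
  obtain ⟨n, c, h0, hlast, hc⟩ := hK
  refine ⟨n + 1, Fin.cases H c, by simp, ?_, ?_⟩
  · show (Fin.cases H c (Fin.last (n + 1)) : Subgroup G) = ⊤
    rw [show Fin.last (n + 1) = (Fin.last n).succ from rfl, Fin.cases_succ]
    exact hlast
  · intro i
    induction i using Fin.cases with
    | zero =>
      show (Fin.cases H c ((0 : Fin (n+1)).castSucc) : Subgroup G) ≤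
          Fin.cases H c ((0 : Fin (n+1)).succ) ∧
          ((Fin.cases H c ((0 : Fin (n+1)).castSucc) : Subgroup G).subgroupOf
            (Fin.cases H c ((0 : Fin (n+1)).succ))).Normal
      rw [Fin.castSucc_zero, Fin.cases_zero, Fin.cases_succ, h0]
      exact ⟨hle, hn⟩
    | succ j =>
      rw [← Fin.succ_castSucc]
      simp only [Fin.cases_succ]
      exact hc j

/-- The order of a join divides the product of the orders (one factor normal). -/
lemma card_sup_dvd [Finite G] (H K : Subgroup G) [K.Normal] :
    Nat.card (H ⊔ K : Subgroup G) ∣ Nat.card H * Nat.card K := by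
  have h1 : Nat.card (K.subgroupOf (H ⊔ K)) = Nat.card K :=
    Nat.card_congr (Subgroup.subgroupOfEquivOfLe le_sup_right).toEquiv
  have h2 := Subgroup.card_mul_index (K.subgroupOf (H ⊔ K))
  have h3 : (K.subgroupOf (H ⊔ K)).index = K.relIndex H := Subgroup.relIndex_sup_right H K
  have h4 : K.relIndex H ∣ Nat.card H := Subgroup.index_dvd_card (K.subgroupOf H)
  calc Nat.card (H ⊔ K : Subgroup G) = Nat.card K * K.relIndex H := by
        rw [← h2, h1, h3]
      _ ∣ Nat.card H * Nat.card K := by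
        rw [mul_comm]
        exact mul_dvd_mul h4 dvd_rfl

lemma normal_finset_sup {ι : Type*} (s : Finset ι) (f : ι → Subgroup G)
    (hf : ∀ i ∈ s, (f i).Normal) : (s.sup f).Normal := by
  refine Finset.sup_induction (inferInstance : (⊥ : Subgroup G).Normal) (fun a ha b hb => ?_) hf
  exact @Subgroup.sup_normal _ _ a b ha hb

lemma card_finset_sup_dvd [Finite G] {ι : Type*} (s : Finset ι)
    (f : ι → Subgroup G) (hf : ∀ i ∈ s, (f i).Normal) :
    Nat.card (s.sup f : Subgroup G) ∣ ∏ i ∈ s, Nat.card (f i) := by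
  classical
  induction s using Finset.cons_induction with
  | empty => simp
  | cons a s ha IH =>
    rw [Finset.sup_cons, Finset.prod_cons]
    haveI : (f a).Normal := hf a (Finset.mem_cons.mpr (Or.inl rfl))
    haveI : (s.sup f).Normal := normal_finset_sup s f fun i hi => hf i (Finset.mem_cons.mpr
      (Or.inr hi))
    refine dvd_trans (card_sup_dvd (f a) (s.sup f)) ?_
    exact mul_dvd_mul_left _ (IH fun i hi => hf i (Finset.mem_cons.mpr (Or.inr hi)))

/-- In a finite group, one Sylow subgroup per prime generates the whole group. -/
lemma sylow_join_eq_top {W : Type*} [Group W] [Finite W] (P : ∀ p : ℕ, Sylow p W) :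
    (Nat.card W).primeFactors.sup (fun p => (P p : Subgroup W)) = ⊤ := by
  set J := (Nat.card W).primeFactors.sup (fun p => (P p : Subgroup W)) with hJ
  have hW0 : Nat.card W ≠ 0 := Nat.card_pos.ne'
  have hJ0 : Nat.card J ≠ 0 := Nat.card_pos.ne'
  refine Subgroup.eq_top_of_card_eq _ (Nat.dvd_antisymm (Subgroup.card_subgroup_dvd_card J) ?_)
  rw [← Nat.factorization_le_iff_dvd hW0 hJ0]
  intro p
  by_cases hp : p ∈ (Nat.card W).primeFactors
  · haveI : Fact p.Prime := ⟨Nat.prime_of_mem_primeFactors hp⟩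
    have hcard : Nat.card (P p : Subgroup W) = p ^ (Nat.card W).factorization p :=
      Sylow.card_eq_multiplicity (P p)
    have hdvd : Nat.card (P p : Subgroup W) ∣ Nat.card J :=
      Subgroup.card_dvd_of_le (Finset.le_sup (f := fun p => (P p : Subgroup W)) hp)
    rw [hcard] at hdvd
    exact (Nat.Prime.pow_dvd_iff_le_factorization (Fact.out) hJ0).mp hdvd
  · have : (Nat.card W).factorization p = 0 := by
      rw [← Finsupp.notMem_support_iff, Nat.support_factorization]
      exact hp
    rw [this]
    exact Nat.zero_le _

end AuxiliaryLemmas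


/-- A finite group generated by two abelian subnormal subgroups is nilpotent. -/



theorem stmt_13 {G : Type*} [Group G] [Finite G] (A B : Subgroup G)
    (hA : A.IsSubnormal') (hB : B.IsSubnormal')
    (hAc : IsMulCommutative A) (hBc : IsMulCommutative B)
    (hgen : A ⊔ B = ⊤) :
    Group.IsNilpotent G := by
  classical
  have hG0 : Nat.card G ≠ 0 := Nat.card_pos.ne'
  have hRmem : ∀ p : ℕ, relCoreP p (⊤ : Subgroup G) ∈ relCoreSet p ⊤ :=
    fun p => relCoreP_mem p ⊤
  have hRnormal : ∀ p : ℕ, (relCoreP p (⊤ : Subgroup G)).Normal := by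
    intro p
    constructor
    intro x hx g
    exact (hRmem p).2.2 g trivial x hx
  have hRp : ∀ p : ℕ, IsPGroup p (relCoreP p (⊤ : Subgroup G)) := fun p => (hRmem p).2.1
  -- every abelian subnormal subgroup lies in the join of the relative cores
  have main : ∀ C : Subgroup G, C.IsSubnormal' → IsMulCommutative C →
      C ≤ (Nat.card G).primeFactors.sup (fun p => relCoreP p (⊤ : Subgroup G)) := by
    intro C hSub hComm
    haveI := hComm
    let P : ∀ p : ℕ, Sylow p ↥C := fun p => Classical.arbitrary _
    have hCjoin : (Nat.card ↥C).primeFactors.sup (fun p => (P p : Subgroup ↥C)) = ⊤ :=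
      sylow_join_eq_top P
    have hCeq : C = (Nat.card ↥C).primeFactors.sup
        (fun p => ((P p : Subgroup ↥C)).map C.subtype) := by
      have hcomp : ((Nat.card ↥C).primeFactors.sup (fun p => (P p : Subgroup ↥C))).map C.subtype
          = (Nat.card ↥C).primeFactors.sup (fun p => ((P p : Subgroup ↥C)).map C.subtype) :=
        Finset.comp_sup_eq_sup_comp (Subgroup.map C.subtype)
          (fun x y => Subgroup.map_sup x y C.subtype) (Subgroup.map_bot C.subtype)
      rw [← hcomp, hCjoin, ← MonoidHom.range_eq_map, Subgroup.range_subtype]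
    rw [hCeq]
    refine Finset.sup_le fun p hp => ?_
    have hpprime : p.Prime := Nat.prime_of_mem_primeFactors hp
    have hpG : p ∈ (Nat.card G).primeFactors :=
      Nat.mem_primeFactors.mpr ⟨hpprime,
        dvd_trans (Nat.dvd_of_mem_primeFactors hp) (Subgroup.card_subgroup_dvd_card C), hG0⟩
    refine le_trans ?_ (Finset.le_sup (f := fun p => relCoreP p (⊤ : Subgroup G)) hpG)
    -- the image of the Sylow subgroup is a subnormal p-subgroup of G
    have hmaple : ((P p : Subgroup ↥C)).map C.subtype ≤ C := Subgroup.map_subtype_le _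
    have hmapnorm : ((((P p : Subgroup ↥C)).map C.subtype).subgroupOf C).Normal := by
      constructor
      rintro ⟨x, hxC⟩ hx ⟨g, hgC⟩
      rw [Subgroup.mem_subgroupOf] at hx ⊢
      have hxmem : x ∈ C := hxC
      have : (g : G) * x * g⁻¹ = x := by
        rw [Subgroup.mul_comm_of_mem_isMulCommutative C hgC hxmem, mul_inv_cancel_right]
      simpa [this] using hx
    have hsub : (((P p : Subgroup ↥C)).map C.subtype).IsSubnormal' :=
      Subgroup.IsSubnormal'.of_le_of_normal hmaple hmapnorm hSub
    have hpgroup : IsPGroup p (((P p : Subgroup ↥C)).map C.subtype) := (P p).2.map _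
    exact hsub.pgroup_le_relCoreP hpgroup
  -- the relative cores generate G
  have hT : (Nat.card G).primeFactors.sup (fun p => relCoreP p (⊤ : Subgroup G)) = ⊤ := by
    refine le_antisymm le_top (le_trans hgen.ge (sup_le (main A hA hAc) (main B hB hBc)))
  -- |G| divides the product of the orders of the relative cores
  have hdvd : Nat.card G ∣
      ∏ p ∈ (Nat.card G).primeFactors, Nat.card (relCoreP p (⊤ : Subgroup G)) := by
    have h1 := card_finset_sup_dvd (Nat.card G).primeFactors
      (fun p => relCoreP p (⊤ : Subgroup G)) (fun p _ => hRnormal p)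
    rw [hT] at h1
    calc Nat.card G = Nat.card ((⊤ : Subgroup G)) := (Subgroup.card_top).symm
      _ ∣ _ := h1
  -- every Sylow subgroup of G is normal
  suffices hS : ∀ (p : ℕ) (_ : Fact p.Prime) (Q : Sylow p G), (Q : Subgroup G).Normal by
    exact ((isNilpotent_of_finite_tfae (G := G)).out 0 3).mpr hS
  intro p hp Q
  by_cases hpG : p ∣ Nat.card G
  · have hpmem : p ∈ (Nat.card G).primeFactors := Nat.mem_primeFactors.mpr ⟨hp.out, hpG, hG0⟩
    -- the relative p-core has full p-power order
    have hcardR : p ^ (Nat.card G).factorization p ∣ Nat.card (relCoreP p (⊤ : Subgroup G)) := by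
      have h1 : p ^ (Nat.card G).factorization p ∣
          ∏ q ∈ (Nat.card G).primeFactors, Nat.card (relCoreP q (⊤ : Subgroup G)) :=
        dvd_trans (Nat.ordProj_dvd _ p) hdvd
      rw [← Finset.prod_erase_mul _ _ hpmem] at h1
      have hcop : Nat.Coprime (p ^ (Nat.card G).factorization p)
          (∏ q ∈ (Nat.card G).primeFactors.erase p,
            Nat.card (relCoreP q (⊤ : Subgroup G))) := by
        refine Nat.Coprime.pow_left _ (Nat.Coprime.prod_right fun q hq => ?_)
        have hqprime : q.Prime := Nat.prime_of_mem_primeFactors (Finset.mem_of_mem_erase hq)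
        haveI : Fact q.Prime := ⟨hqprime⟩
        obtain ⟨e, he⟩ := (IsPGroup.iff_card).mp (hRp q)
        rw [he]
        exact Nat.Coprime.pow_right _
          ((Nat.coprime_primes hp.out hqprime).mpr (Finset.ne_of_mem_erase hq).symm)
      exact hcop.dvd_of_dvd_mul_left h1
    obtain ⟨Q0, hQ0⟩ := (hRp p).exists_le_sylow
    have hcard : Nat.card (Q0 : Subgroup G) ≤ Nat.card (relCoreP p (⊤ : Subgroup G)) := by
      rw [Sylow.card_eq_multiplicity Q0]
      exact Nat.le_of_dvd Nat.card_pos hcardR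
    have hEq : relCoreP p (⊤ : Subgroup G) = (Q0 : Subgroup G) :=
      Subgroup.eq_of_le_of_card_ge hQ0 hcard
    have hQ0norm : (Q0 : Subgroup G).Normal := hEq ▸ hRnormal p
    haveI : Unique (Sylow p G) := Sylow.unique_of_normal Q0 hQ0norm
    have : Q = Q0 := by rw [Unique.uniq this Q, Unique.uniq this Q0]
    rw [this]
    exact hQ0norm
  · -- p does not divide |G|: the Sylow subgroup is trivial
    obtain ⟨k, hk⟩ := (IsPGroup.iff_card).mp Q.2
    have hdvd' : p ^ k ∣ Nat.card G := hk ▸ Subgroup.card_subgroup_dvd_card (Q : Subgroup G)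
    have hk0 : k = 0 := by
      by_contra h
      exact hpG (dvd_trans (dvd_pow_self p h) hdvd')
    have : (Q : Subgroup G) = ⊥ := Subgroup.card_eq_one.mp (by rw [hk, hk0, pow_zero])
    rw [this]
    infer_instance
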